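/- Let Q be a 3-uniform hypergraph on n vertices that contains no copy of K_{H,t}, where H is the 2-uniform graph consisting of two disjoint edges and K_{H,t} is the 3-uniform hypergraph obtained from H by adding t new vertices v_1, ..., v_t and replacing each edge e of H by the t triples e ∪ {v_i}. Then Q has O(n^(3 - 1/t)) edges. -/

import Mathlib

open Finset

private lemma union_singleton_eq_insert' {V : Type*} [DecidableEq V] (e : Finset V) (v : V) :
    e ∪ {v} = insert v e := by rw [Finset.union_comm, ← Finset.insert_eq]

private lemma sum_link_card' {V : Type} [Fintype V] [DecidableEq V]
    (E : Finset (Finset V)) (hE : ∀ e ∈ E, e.card = 3) :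
    ∑ e ∈ (Finset.univ : Finset V).powersetCard 2,
      (Finset.univ.filter (fun v => e ∪ {v} ∈ E)).card = 3 * E.card := by
  classical
  have h1 : ∑ e ∈ (Finset.univ : Finset V).powersetCard 2,
      (Finset.univ.filter (fun v => e ∪ {v} ∈ E)).card
      = (((Finset.univ : Finset V).powersetCard 2).sigma
          (fun e => Finset.univ.filter (fun v => e ∪ {v} ∈ E))).card :=
    (Finset.card_sigma _ _).symm
  have h2 : (E.sigma (fun f => f)).card = 3 * E.card := by
    rw [Finset.card_sigma, Finset.sum_congr rfl (fun f hf => hE f hf), Finset.sum_const,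
      smul_eq_mul, mul_comm]
  rw [h1, ← h2]
  refine Finset.card_bij (fun p _ => (⟨p.1 ∪ {p.2}, p.2⟩ : Σ _ : Finset V, V)) ?_ ?_ ?_
  · rintro ⟨e, v⟩ hp
    rw [Finset.mem_sigma, Finset.mem_powersetCard] at hp
    obtain ⟨⟨-, hcard⟩, hv⟩ := hp
    rw [Finset.mem_filter] at hv
    rw [Finset.mem_sigma]
    exact ⟨hv.2, Finset.mem_union_right _ (Finset.mem_singleton_self v)⟩
  · rintro ⟨e, v⟩ hp ⟨e', v'⟩ hp' heq
    rw [Finset.mem_sigma, Finset.mem_powersetCard, Finset.mem_filter] at hp hp'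
    obtain ⟨⟨-, hcard⟩, -, hv⟩ := hp
    obtain ⟨⟨-, hcard'⟩, -, hv'⟩ := hp'
    dsimp only at hcard hv hcard' hv' heq
    have h12 := Sigma.mk.inj_iff.mp heq
    have hvv : v = v' := eq_of_heq h12.2
    subst hvv
    have hne : v ∉ e := by
      intro hmem
      have : e ∪ {v} = e := by
        rw [union_singleton_eq_insert', Finset.insert_eq_self]; exact hmem
      have h3 := hE _ hv
      rw [this] at h3
      omega
    have hne' : v ∉ e' := by
      intro hmem
      have : e' ∪ {v} = e' := by
        rw [union_singleton_eq_insert', Finset.insert_eq_self]; exact hmem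
      have h3 := hE _ hv'
      rw [this] at h3
      omega
    have h1 := h12.1
    rw [union_singleton_eq_insert', union_singleton_eq_insert'] at h1
    have : e = e' := by
      have := congrArg (fun s => Finset.erase s v) h1
      simpa [Finset.erase_insert hne, Finset.erase_insert hne'] using this
    simp [this]
  · rintro ⟨f, v⟩ hb
    rw [Finset.mem_sigma] at hb
    obtain ⟨hf, hv⟩ := hb
    refine ⟨⟨f.erase v, v⟩, ?_, ?_⟩
    · rw [Finset.mem_sigma, Finset.mem_powersetCard, Finset.mem_filter]
      have hcard : (f.erase v).card = 2 := by
        rw [Finset.card_erase_of_mem hv, hE f hf]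
      have hins : f.erase v ∪ {v} = f := by
        rw [union_singleton_eq_insert', Finset.insert_erase hv]
      exact ⟨⟨Finset.subset_univ _, hcard⟩, Finset.mem_univ v, by rw [hins]; exact hf⟩
    · have hins : f.erase v ∪ {v} = f := by
        rw [union_singleton_eq_insert', Finset.insert_erase hv]
      simp [hins]

private lemma pair_vertex_bound' {V : Type} [Fintype V] [DecidableEq V] (x : V) :
    (((Finset.univ : Finset V).powersetCard 2).filter (fun e => x ∈ e)).card
      ≤ Fintype.card V := by
  classical
  have h : (((Finset.univ : Finset V).powersetCard 2).filter (fun e => x ∈ e)).card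
      ≤ (((Finset.univ : Finset V).powersetCard 1)).card := by
    apply Finset.card_le_card_of_injOn (fun e => e.erase x)
    · intro e he
      rw [Finset.mem_coe, Finset.mem_filter, Finset.mem_powersetCard] at he
      rw [Finset.mem_coe, Finset.mem_powersetCard]
      refine ⟨Finset.subset_univ _, ?_⟩
      rw [Finset.card_erase_of_mem he.2, he.1.2]
    · intro e he e' he' hee
      simp only [Finset.coe_filter, Set.mem_setOf_eq] at he he'
      have h2 : insert x (e.erase x) = insert x (e'.erase x) := congrArg (insert x) hee
      rwa [Finset.insert_erase he.2, Finset.insert_erase he'.2] at h2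
  calc _ ≤ _ := h
  _ = Fintype.card V := by
      rw [Finset.card_powersetCard, Finset.card_univ, Nat.choose_one_right]

private lemma inter_bound' {V : Type} [Fintype V] [DecidableEq V] (t : ℕ)
    (E : Finset (Finset V)) (hE : ∀ e ∈ E, e.card = 3)
    (hfree : ¬ ∃ (e₁ e₂ T : Finset V), e₁.card = 2 ∧ e₂.card = 2 ∧ Disjoint e₁ e₂ ∧
        T.card = t ∧ Disjoint T (e₁ ∪ e₂) ∧
        ∀ v ∈ T, e₁ ∪ {v} ∈ E ∧ e₂ ∪ {v} ∈ E)
    (T : Finset V) (hT : T.card = t) :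
    (((Finset.univ : Finset V).powersetCard 2).filter
        (fun e => ∀ v ∈ T, e ∪ {v} ∈ E)).card ≤ 2 * Fintype.card V := by
  classical
  set G := ((Finset.univ : Finset V).powersetCard 2).filter
      (fun e => ∀ v ∈ T, e ∪ {v} ∈ E) with hGdef
  rcases G.eq_empty_or_nonempty with h | ⟨e₀, he₀⟩
  · simp [h]
  · have he₀' := he₀
    rw [hGdef, Finset.mem_filter, Finset.mem_powersetCard] at he₀'
    obtain ⟨⟨-, hc₀⟩, hp₀⟩ := he₀'
    obtain ⟨a, b, hab, he₀ab⟩ := Finset.card_eq_two.mp hc₀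
    -- every member of T is outside any edge of G
    have hTout : ∀ e ∈ G, ∀ v ∈ T, v ∉ e := by
      intro e he v hv hve
      rw [hGdef, Finset.mem_filter, Finset.mem_powersetCard] at he
      have h1 : e ∪ {v} = e := by
        rw [union_singleton_eq_insert', Finset.insert_eq_self]; exact hve
      have h2 := hE _ (he.2 v hv)
      rw [h1] at h2
      have := he.1.2
      omega
    have hsub : G ⊆ (((Finset.univ : Finset V).powersetCard 2).filter (fun e => a ∈ e))
        ∪ (((Finset.univ : Finset V).powersetCard 2).filter (fun e => b ∈ e)) := by
      intro e he
      have he' := he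
      rw [hGdef, Finset.mem_filter] at he'
      by_contra hcon
      rw [Finset.mem_union, Finset.mem_filter, Finset.mem_filter] at hcon
      push_neg at hcon
      have ha : a ∉ e := hcon.1 he'.1
      have hb : b ∉ e := hcon.2 he'.1
      have hdisj : Disjoint e₀ e := by
        rw [Finset.disjoint_left]
        intro x hx
        rw [he₀ab] at hx
        rcases Finset.mem_insert.mp hx with rfl | hx
        · exact ha
        · rw [Finset.mem_singleton] at hx; subst hx; exact hb
      apply hfree
      refine ⟨e₀, e, T, hc₀, ?_, hdisj, hT, ?_, ?_⟩
      · rw [Finset.mem_powersetCard] at *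
        exact ((Finset.mem_filter.mp (hGdef ▸ he)).1 |> Finset.mem_powersetCard.mp).2
      · rw [Finset.disjoint_left]
        intro v hv hvmem
        rcases Finset.mem_union.mp hvmem with h' | h'
        · exact hTout e₀ he₀ v hv h'
        · exact hTout e he v hv h'
      · intro v hv
        exact ⟨hp₀ v hv, he'.2 v hv⟩
    calc G.card ≤ _ := Finset.card_le_card hsub
    _ ≤ _ + _ := Finset.card_union_le _ _
    _ ≤ Fintype.card V + Fintype.card V :=
        Nat.add_le_add (pair_vertex_bound' a) (pair_vertex_bound' b)
    _ = 2 * Fintype.card V := by ring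

private lemma sum_choose_bound' {V : Type} [Fintype V] [DecidableEq V] (t : ℕ)
    (E : Finset (Finset V)) (hE : ∀ e ∈ E, e.card = 3)
    (hfree : ¬ ∃ (e₁ e₂ T : Finset V), e₁.card = 2 ∧ e₂.card = 2 ∧ Disjoint e₁ e₂ ∧
        T.card = t ∧ Disjoint T (e₁ ∪ e₂) ∧
        ∀ v ∈ T, e₁ ∪ {v} ∈ E ∧ e₂ ∪ {v} ∈ E) :
    ∑ e ∈ (Finset.univ : Finset V).powersetCard 2,
      ((Finset.univ.filter (fun v => e ∪ {v} ∈ E)).card).choose t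
      ≤ Fintype.card V ^ t * (2 * Fintype.card V) := by
  classical
  have inter_bound'' : ∀ T : Finset V, T.card = t →
      (((Finset.univ : Finset V).powersetCard 2).filter
        (fun e => ∀ v ∈ T, e ∪ {v} ∈ E)).card ≤ 2 * Fintype.card V :=
    fun T hT => inter_bound' t E hE hfree T hT
  have hstep : ∀ e : Finset V,
      ((Finset.univ.filter (fun v => e ∪ {v} ∈ E)).card).choose t
      = (((Finset.univ : Finset V).powersetCard t).filter
          (fun T => T ⊆ Finset.univ.filter (fun v => e ∪ {v} ∈ E))).card := by
    intro e
    rw [← Finset.card_powersetCard]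
    congr 1
    ext T
    simp only [Finset.mem_powersetCard, Finset.mem_filter, Finset.subset_univ, true_and]
    tauto
  calc ∑ e ∈ (Finset.univ : Finset V).powersetCard 2,
        ((Finset.univ.filter (fun v => e ∪ {v} ∈ E)).card).choose t
      = ∑ e ∈ (Finset.univ : Finset V).powersetCard 2,
          ∑ T ∈ (Finset.univ : Finset V).powersetCard t,
            if T ⊆ Finset.univ.filter (fun v => e ∪ {v} ∈ E) then 1 else 0 := by
        refine Finset.sum_congr rfl (fun e _ => ?_)
        rw [hstep e, Finset.card_filter]
    _ = ∑ T ∈ (Finset.univ : Finset V).powersetCard t,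
          ∑ e ∈ (Finset.univ : Finset V).powersetCard 2,
            if T ⊆ Finset.univ.filter (fun v => e ∪ {v} ∈ E) then 1 else 0 :=
        Finset.sum_comm
    _ = ∑ T ∈ (Finset.univ : Finset V).powersetCard t,
          (((Finset.univ : Finset V).powersetCard 2).filter
            (fun e => ∀ v ∈ T, e ∪ {v} ∈ E)).card := by
        refine Finset.sum_congr rfl (fun T _ => ?_)
        rw [Finset.card_filter]
        refine Finset.sum_congr rfl (fun e _ => ?_)
        congr 1
        simp only [Finset.subset_iff, Finset.mem_filter, Finset.mem_univ, true_and]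
    _ ≤ ∑ T ∈ (Finset.univ : Finset V).powersetCard t, 2 * Fintype.card V := by
        refine Finset.sum_le_sum (fun T hT => ?_)
        exact inter_bound'' T (Finset.mem_powersetCard.mp hT).2
    _ = (Fintype.card V).choose t * (2 * Fintype.card V) := by
        rw [Finset.sum_const, smul_eq_mul, Finset.card_powersetCard, Finset.card_univ]
    _ ≤ Fintype.card V ^ t * (2 * Fintype.card V) :=
        Nat.mul_le_mul_right _ (Nat.choose_le_pow _ _)

theorem matching_expansion_turan (t : ℕ) (ht : 2 ≤ t) :
    ∃ c : ℝ, ∀ (V : Type) [Fintype V] [DecidableEq V]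
      (E : Finset (Finset V)), (∀ e ∈ E, e.card = 3) →
      (¬ ∃ (e₁ e₂ T : Finset V), e₁.card = 2 ∧ e₂.card = 2 ∧ Disjoint e₁ e₂ ∧
        T.card = t ∧ Disjoint T (e₁ ∪ e₂) ∧
        ∀ v ∈ T, e₁ ∪ {v} ∈ E ∧ e₂ ∪ {v} ∈ E) →
      (E.card : ℝ) ≤ c * (Fintype.card V : ℝ) ^ (3 - 1 / (t : ℝ)) := by
  classical
  refine ⟨2 * (t : ℝ), ?_⟩
  intro V _ _ E hE hfree
  have htR : (2:ℝ) ≤ (t:ℝ) := by exact_mod_cast ht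
  have htpos : (0:ℝ) < t := by linarith
  have hinv : (1:ℝ)/t ≤ 1 := by
    rw [div_le_one htpos]; linarith
  -- trivial case : few vertices
  by_cases hn3 : Fintype.card V < 3
  · have hE0 : E = ∅ := by
      by_contra h
      obtain ⟨f, hf⟩ := Finset.nonempty_iff_ne_empty.mpr h
      have h3 := hE f hf
      have hle : f.card ≤ Fintype.card V := by
        calc f.card ≤ (Finset.univ : Finset V).card :=
              Finset.card_le_card (Finset.subset_univ f)
          _ = Fintype.card V := Finset.card_univ
      omega
    rw [hE0]
    simp only [Finset.card_empty, Nat.cast_zero]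
    positivity
  push_neg at hn3
  set n := Fintype.card V with hndef
  have hnR : (1:ℝ) ≤ (n:ℝ) := by exact_mod_cast (by omega : 1 ≤ n)
  have hn0 : (0:ℝ) ≤ (n:ℝ) := by linarith
  set B : ℝ := (n : ℝ) ^ (3 - 1 / (t:ℝ)) with hBdef
  have hB0 : 0 ≤ B := Real.rpow_nonneg hn0 _
  have hBt : B ^ t = (n:ℝ) ^ (3*t - 1) := by
    rw [hBdef, ← Real.rpow_natCast ((n:ℝ) ^ (3 - 1/(t:ℝ))) t, ← Real.rpow_natCast (n:ℝ) (3*t-1),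
      ← Real.rpow_mul hn0]
    congr 1
    have hc : ((3*t - 1 : ℕ) : ℝ) = 3*(t:ℝ) - 1 := by
      have h1 : 1 ≤ 3*t := by omega
      push_cast [Nat.cast_sub h1]
      ring
    rw [hc]
    field_simp
  have hsq : (n:ℝ)^2 ≤ B := by
    have h2 : ((2:ℕ):ℝ) ≤ 3 - 1/(t:ℝ) := by push_cast; linarith
    calc (n:ℝ)^2 = (n:ℝ)^((2:ℕ):ℝ) := (Real.rpow_natCast _ 2).symm
      _ ≤ B := Real.rpow_le_rpow_of_exponent_le hnR h2
  -- notation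
  set P : Finset (Finset V) := (Finset.univ : Finset V).powersetCard 2 with hPdef
  set d : Finset V → ℕ := fun e => (Finset.univ.filter (fun v => e ∪ {v} ∈ E)).card with hddef
  have hsum : ∑ e ∈ P, d e = 3 * E.card := sum_link_card' E hE
  have hchoose : ∑ e ∈ P, (d e).choose t ≤ n ^ t * (2 * n) := sum_choose_bound' t E hE hfree
  have hPcard : (P.card : ℝ) ≤ (n:ℝ)^2 := by
    have : P.card ≤ n^2 := by
      rw [hPdef, Finset.card_powersetCard, Finset.card_univ]
      exact Nat.choose_le_pow _ _
    exact_mod_cast this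
  have hterm : ∀ e : Finset V, (d e - t)^t ≤ t^t * (d e).choose t := by
    intro e
    calc (d e - t)^t ≤ (d e + 1 - t)^t := Nat.pow_le_pow_left (by omega) t
      _ ≤ (d e).descFactorial t := Nat.pow_sub_le_descFactorial (d e) t
      _ = Nat.factorial t * (d e).choose t := Nat.descFactorial_eq_factorial_mul_choose _ _
      _ ≤ t^t * (d e).choose t := Nat.mul_le_mul_right _ (Nat.factorial_le_pow t)
  have hnatsum : ∑ e ∈ P, (d e - t)^t ≤ t^t * (n^t * (2*n)) := by
    calc ∑ e ∈ P, (d e - t)^t ≤ ∑ e ∈ P, t^t * (d e).choose t :=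
          Finset.sum_le_sum (fun e _ => hterm e)
      _ = t^t * ∑ e ∈ P, (d e).choose t := (Finset.mul_sum _ _ _).symm
      _ ≤ t^t * (n^t * (2*n)) := Nat.mul_le_mul_left _ hchoose
  have hsumpow : ∑ e ∈ P, ((d e - t : ℕ) : ℝ)^t ≤ (t:ℝ)^t * ((n:ℝ)^t * (2*(n:ℝ))) := by
    have := (Nat.cast_le (α := ℝ)).mpr hnatsum
    push_cast at this
    convert this using 2
  -- main split
  by_cases hcase : (3 * E.card : ℝ) ≤ 2*(t:ℝ)*(n:ℝ)^2
  · have h1 : (t:ℝ)*(n:ℝ)^2 ≤ (t:ℝ)*B := mul_le_mul_of_nonneg_left hsq (by linarith)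
    have h2 : 0 ≤ (t:ℝ)*B := mul_nonneg (by linarith) hB0
    rw [hndef] at *
    linarith
  push_neg at hcase
  set A : ℝ := ∑ e ∈ P, ((d e - t : ℕ) : ℝ) with hAdef
  have hA0 : 0 ≤ A := Finset.sum_nonneg (fun e _ => Nat.cast_nonneg _)
  have hA1 : 3*(E.card:ℝ) - (t:ℝ)*(n:ℝ)^2 ≤ A := by
    have e1 : ∀ e ∈ P, (d e : ℝ) - (t:ℝ) ≤ ((d e - t : ℕ) : ℝ) := by
      intro e _
      rcases le_or_gt t (d e) with h | h
      · rw [Nat.cast_sub h]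
      · have : d e - t = 0 := by omega
        rw [this]
        push_cast
        have : (d e : ℝ) < (t:ℝ) := by exact_mod_cast h
        linarith
    have e2 : ∑ e ∈ P, ((d e:ℝ) - (t:ℝ)) ≤ A := Finset.sum_le_sum e1
    rw [Finset.sum_sub_distrib, Finset.sum_const, nsmul_eq_mul] at e2
    have e3 : ∑ e ∈ P, (d e : ℝ) = 3*(E.card:ℝ) := by exact_mod_cast hsum
    have e4 : (P.card:ℝ) * (t:ℝ) ≤ (n:ℝ)^2 * (t:ℝ) :=
      mul_le_mul_of_nonneg_right hPcard (by linarith)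
    linarith
  have hAlow : (3*(E.card:ℝ))/2 ≤ A := by linarith
  -- power mean
  have hpm := pow_sum_div_card_le_sum_pow (s := P)
    (f := fun e => ((d e - t : ℕ):ℝ)) (fun i _ => Nat.cast_nonneg _) (t-1)
  rw [Nat.sub_add_cancel (by omega : 1 ≤ t)] at hpm
  have hPpos : (0:ℝ) < (P.card:ℝ)^(t-1) := by
    have hp : 0 < P.card := by
      rw [hPdef, Finset.card_powersetCard, Finset.card_univ]
      exact Nat.choose_pos (by omega)
    positivity
  have hAt : A^t ≤ (P.card:ℝ)^(t-1) * ∑ e ∈ P, ((d e - t : ℕ):ℝ)^t := by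
    rw [div_le_iff₀ hPpos] at hpm
    calc A^t ≤ (∑ e ∈ P, ((d e - t : ℕ):ℝ)^t) * (P.card:ℝ)^(t-1) := hpm
      _ = _ := mul_comm _ _
  -- combine
  have h5 : ((3*(E.card:ℝ))/2)^t ≤ A^t := pow_le_pow_left₀ (by positivity) hAlow t
  have h6 : (P.card:ℝ)^(t-1) ≤ ((n:ℝ)^2)^(t-1) := pow_le_pow_left₀ (Nat.cast_nonneg _) hPcard _
  have h7 : A^t ≤ ((n:ℝ)^2)^(t-1) * ((t:ℝ)^t * ((n:ℝ)^t * (2*(n:ℝ)))) := by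
    refine le_trans hAt (mul_le_mul h6 hsumpow ?_ (by positivity))
    exact Finset.sum_nonneg (fun e _ => by positivity)
  have h8 : ((n:ℝ)^2)^(t-1) * ((t:ℝ)^t * ((n:ℝ)^t * (2*(n:ℝ)))) 
      = 2 * (t:ℝ)^t * (n:ℝ)^(3*t-1) := by
    have hexp2 : 2*(t-1) + (t+1) = 3*t - 1 := by omega
    calc ((n:ℝ)^2)^(t-1) * ((t:ℝ)^t * ((n:ℝ)^t * (2*(n:ℝ))))
        = 2 * (t:ℝ)^t * ((n:ℝ)^(2*(t-1)) * (n:ℝ)^(t+1)) := by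
          rw [← pow_mul, pow_succ]
          ring
      _ = 2 * (t:ℝ)^t * (n:ℝ)^(2*(t-1) + (t+1)) := by rw [← pow_add]
      _ = 2 * (t:ℝ)^t * (n:ℝ)^(3*t-1) := by rw [hexp2]
  have h9 : 2 * (t:ℝ)^t * (n:ℝ)^(3*t-1) ≤ (2*(t:ℝ)*B)^t := by
    rw [mul_pow, mul_pow, hBt]
    have h2p : (2:ℝ) ≤ 2^t := by
      calc (2:ℝ) = 2^1 := (pow_one 2).symm
        _ ≤ 2^t := pow_le_pow_right₀ one_le_two (by omega)
    have htt : (0:ℝ) ≤ (t:ℝ)^t := by positivity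
    have hnn : (0:ℝ) ≤ (n:ℝ)^(3*t-1) := by positivity
    exact mul_le_mul_of_nonneg_right (mul_le_mul_of_nonneg_right h2p htt) hnn
  have h10 : ((3*(E.card:ℝ))/2)^t ≤ (2*(t:ℝ)*B)^t := by
    calc ((3*(E.card:ℝ))/2)^t ≤ A^t := h5
      _ ≤ _ := h7
      _ = _ := h8
      _ ≤ _ := h9
  have h11 : (3*(E.card:ℝ))/2 ≤ 2*(t:ℝ)*B :=
    le_of_pow_le_pow_left₀ (by omega) (by positivity) h10
  have hfin : 0 ≤ (t:ℝ)*B := mul_nonneg (by linarith) hB0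
  rw [hndef] at *
  linarith
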